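/- Let m ≥ 1 be a natural number and let a₁ ≤ a₂ ≤ … ≤ a_m and b₁ ≤ b₂ ≤ … ≤ b_m be non-decreasing real sequences with 1 ≤ a_i ≤ m, 1 ≤ b_i ≤ m, and a_i ≤ b_i for every i. Then ∑_{i=1}^{m−1} |a_i/b_i − a_{i+1}/b_{i+1}| ≤ 2·ln m. -/

import Mathlib

lemma ratio_log_aux (x y : ℝ) (hx : 0 < x) (hxy : x ≤ y) :
    (y - x) / y ≤ Real.log y - Real.log x := by
  have hy : 0 < y := hx.trans_le hxy
  have h := Real.log_le_sub_one_of_pos (show (0:ℝ) < x / y from div_pos hx hy)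
  rw [Real.log_div hx.ne' hy.ne'] at h
  have h1 : (y - x) / y = 1 - x / y := by field_simp
  linarith

lemma tele_aux (m : ℕ) (hm : 1 ≤ m) (f : ℕ → ℝ) :
    ∑ i ∈ Finset.Ico 1 m, (f (i + 1) - f i) = f m - f 1 := by
  induction m with
  | zero => omega
  | succ n ih =>
    rcases Nat.lt_or_ge n 1 with h | h
    · interval_cases n
      simp
    · rw [Finset.sum_Ico_succ_top (by omega), ih h]
      ring

/-- For `m ≥ 1` and non-decreasing sequences `a i`, `b i` (indexed `1,…,m`)
with `1 ≤ a i ≤ m`, `1 ≤ b i ≤ m` and `a i ≤ b i`, the total variation of the ratios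
is at most `2 ln m`. -/
theorem stmt_0 (m : ℕ) (hm : 1 ≤ m) (a b : ℕ → ℝ)
    (ha_mono : ∀ i, 1 ≤ i → i < m → a i ≤ a (i + 1))
    (hb_mono : ∀ i, 1 ≤ i → i < m → b i ≤ b (i + 1))
    (ha_lb : ∀ i, 1 ≤ i → i ≤ m → 1 ≤ a i)
    (ha_ub : ∀ i, 1 ≤ i → i ≤ m → a i ≤ m)
    (hb_lb : ∀ i, 1 ≤ i → i ≤ m → 1 ≤ b i)
    (hb_ub : ∀ i, 1 ≤ i → i ≤ m → b i ≤ m)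
    (hab : ∀ i, 1 ≤ i → i ≤ m → a i ≤ b i) :
    ∑ i ∈ Finset.Ico 1 m, |a i / b i - a (i + 1) / b (i + 1)| ≤ 2 * Real.log m := by
  have key : ∀ i ∈ Finset.Ico 1 m,
      |a i / b i - a (i + 1) / b (i + 1)| ≤
        (Real.log (a (i + 1)) - Real.log (a i)) +
        (Real.log (b (i + 1)) - Real.log (b i)) := by
    intro i hi
    rw [Finset.mem_Ico] at hi
    obtain ⟨h1, h2⟩ := hi
    have hA : 1 ≤ a i := ha_lb i h1 h2.le
    have hA' : 1 ≤ a (i + 1) := ha_lb (i + 1) (by omega) (by omega)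
    have hB : 1 ≤ b i := hb_lb i h1 h2.le
    have hB' : 1 ≤ b (i + 1) := hb_lb (i + 1) (by omega) (by omega)
    have hAA : a i ≤ a (i + 1) := ha_mono i h1 h2
    have hBB : b i ≤ b (i + 1) := hb_mono i h1 h2
    have hAB : a i ≤ b i := hab i h1 h2.le
    have hA0 : (0:ℝ) < a i := by linarith
    have hA'0 : (0:ℝ) < a (i + 1) := by linarith
    have hB0 : (0:ℝ) < b i := by linarith
    have hB'0 : (0:ℝ) < b (i + 1) := by linarith
    have habs : |a i / b i - a (i + 1) / b (i + 1)| ≤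
        (a (i + 1) - a i) / a (i + 1) + (b (i + 1) - b i) / b (i + 1) := by
      rw [abs_sub_le_iff]
      constructor
      · rw [div_sub_div _ _ hB0.ne' hB'0.ne', div_add_div _ _ hA'0.ne' hB'0.ne',
          div_le_div_iff₀ (by positivity) (by positivity)]
        nlinarith [mul_nonneg (mul_nonneg (mul_nonneg (sub_nonneg.2 hAA) hB'0.le) hB0.le)
            (by positivity : (0:ℝ) ≤ b (i + 1) + a (i + 1)),
          mul_nonneg (mul_nonneg (mul_nonneg hA'0.le hB'0.le) (sub_nonneg.2 hBB))
            (sub_nonneg.2 hAB)]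
      · have hAB' : a (i + 1) ≤ b (i + 1) := hab (i + 1) (by omega) (by omega)
        rw [div_sub_div _ _ hB'0.ne' hB0.ne', div_add_div _ _ hA'0.ne' hB'0.ne',
          div_le_div_iff₀ (by positivity) (by positivity)]
        nlinarith [mul_nonneg (mul_nonneg (mul_nonneg (sub_nonneg.2 hAA) hB0.le)
            (sub_nonneg.2 hAB')) hB'0.le,
          mul_nonneg (mul_nonneg (mul_nonneg hA'0.le (sub_nonneg.2 hBB))
            (by positivity : (0:ℝ) ≤ b i + a i)) hB'0.le]
    have l1 : (a (i + 1) - a i) / a (i + 1) ≤ Real.log (a (i + 1)) - Real.log (a i) :=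
      ratio_log_aux _ _ hA0 hAA
    have l2 : (b (i + 1) - b i) / b (i + 1) ≤ Real.log (b (i + 1)) - Real.log (b i) :=
      ratio_log_aux _ _ hB0 hBB
    linarith
  calc ∑ i ∈ Finset.Ico 1 m, |a i / b i - a (i + 1) / b (i + 1)|
      ≤ ∑ i ∈ Finset.Ico 1 m,
        ((Real.log (a (i + 1)) - Real.log (a i)) +
         (Real.log (b (i + 1)) - Real.log (b i))) := Finset.sum_le_sum key
    _ = (Real.log (a m) - Real.log (a 1)) + (Real.log (b m) - Real.log (b 1)) := by
        rw [Finset.sum_add_distrib, tele_aux m hm (fun j => Real.log (a j)),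
          tele_aux m hm (fun j => Real.log (b j))]
    _ ≤ 2 * Real.log m := by
        have la1 : 0 ≤ Real.log (a 1) := Real.log_nonneg (ha_lb 1 le_rfl hm)
        have lb1 : 0 ≤ Real.log (b 1) := Real.log_nonneg (hb_lb 1 le_rfl hm)
        have lam : Real.log (a m) ≤ Real.log m :=
          Real.log_le_log (by linarith [ha_lb m hm le_rfl]) (ha_ub m hm le_rfl)
        have lbm : Real.log (b m) ≤ Real.log m :=
          Real.log_le_log (by linarith [hb_lb m hm le_rfl]) (hb_ub m hm le_rfl)
        linarith
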